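/- Let x ∈ ℝ^d with ‖x‖ ≤ 1. Then the family of real numbers (φ(x)_α²), indexed over all d-tuples α of non-negative integers, is summable with sum Σ_α φ(x)_α² = 1/(1 − ‖x‖²/2); in particular φ(x) ∈ ℓ² and Σ_α φ(x)_α² ≤ 2. -/

import Mathlib

open Finset

/-- The feature map `φ` of the rational kernel: for `x ∈ ℝ^d` and a multi-index
`α = (α_1,…,α_d)`,
`φ(x)_α = x_1^{α_1}⋯x_d^{α_d} · sqrt(2^{−Σα_i} · (Σα_i)! / Πα_i!)`. -/
noncomputable def phi {d : ℕ} (x : EuclideanSpace ℝ (Fin d)) (α : Fin d → ℕ) : ℝ :=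
  (∏ i, x i ^ α i) *
    Real.sqrt ((2 : ℝ)⁻¹ ^ (∑ i, α i) *
      ((∑ i, α i).factorial : ℝ) / ∏ i, ((α i).factorial : ℝ))

/-- The equivalence grouping multi-indices by their total degree. -/
def degEquiv (d : ℕ) :
    (Σ n : ℕ, (Finset.piAntidiag (univ : Finset (Fin d)) n)) ≃ (Fin d → ℕ) where
  toFun p := p.2
  invFun α := ⟨∑ i, α i, α, by simp [Finset.mem_piAntidiag]⟩
  left_inv := by
    rintro ⟨n, α, hα⟩
    obtain ⟨h1, -⟩ := Finset.mem_piAntidiag.1 hα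
    subst h1
    rfl
  right_inv := fun α => rfl

lemma phi_sq_eq {d : ℕ} (x : EuclideanSpace ℝ (Fin d)) (α : Fin d → ℕ) :
    (phi x α) ^ 2 = (Nat.multinomial univ α : ℝ) * (∏ i, (x i ^ 2) ^ α i) *
      (2 : ℝ)⁻¹ ^ (∑ i, α i) := by
  have hfac : (0 : ℝ) < ∏ i, ((α i).factorial : ℝ) := by positivity
  have hnn : (0 : ℝ) ≤ (2 : ℝ)⁻¹ ^ (∑ i, α i) *
      ((∑ i, α i).factorial : ℝ) / ∏ i, ((α i).factorial : ℝ) := by positivity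
  have hmul : (((∑ i, α i).factorial : ℝ)) / (∏ i, ((α i).factorial : ℝ)) =
      (Nat.multinomial univ α : ℝ) := by
    rw [eq_comm, eq_div_iff hfac.ne', ← Nat.cast_prod, ← Nat.cast_mul, mul_comm,
      Nat.multinomial_spec]
  rw [phi, mul_pow, Real.sq_sqrt hnn, mul_div_assoc, hmul]
  have hprod : (∏ i, x i ^ α i) ^ 2 = ∏ i, (x i ^ 2) ^ α i := by
    rw [← Finset.prod_pow]
    exact Finset.prod_congr rfl fun i _ => by rw [← pow_mul, ← pow_mul, mul_comm]
  rw [hprod]; ring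

lemma fiber_sum {d : ℕ} (x : EuclideanSpace ℝ (Fin d)) (n : ℕ) :
    ∑ α ∈ Finset.piAntidiag (univ : Finset (Fin d)) n, (phi x α) ^ 2 =
      (‖x‖ ^ 2 / 2) ^ n := by
  have h := Finset.sum_pow_eq_sum_piAntidiag (univ : Finset (Fin d))
    (fun i => (x i : ℝ) ^ 2) n
  have hnorm : ‖x‖ ^ 2 = ∑ i, (x i) ^ 2 := by
    rw [EuclideanSpace.norm_eq, Real.sq_sqrt (by positivity)]
    simp [sq_abs]
  calc ∑ α ∈ Finset.piAntidiag (univ : Finset (Fin d)) n, (phi x α) ^ 2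
      = ∑ α ∈ Finset.piAntidiag (univ : Finset (Fin d)) n,
          (Nat.multinomial univ α : ℝ) * (∏ i, (x i ^ 2) ^ α i) * (2:ℝ)⁻¹ ^ n := by
        refine Finset.sum_congr rfl fun α hα => ?_
        obtain ⟨h1, -⟩ := Finset.mem_piAntidiag.1 hα
        rw [phi_sq_eq, h1]
    _ = (∑ i, (x i) ^ 2) ^ n * (2:ℝ)⁻¹ ^ n := by rw [← Finset.sum_mul, ← h]
    _ = (‖x‖ ^ 2 / 2) ^ n := by rw [hnorm, div_pow, ← mul_pow]; ring_nf; simp [one_div]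

/-- For `‖x‖ ≤ 1` the family `(φ(x)_α²)` is summable with sum
`1/(1 − ‖x‖²/2)`; in particular `φ(x) ∈ ℓ²` and the sum is at most `2`. -/
theorem phi_sq_summable_tsum {d : ℕ} (x : EuclideanSpace ℝ (Fin d)) (hx : ‖x‖ ≤ 1) :
    Summable (fun α : Fin d → ℕ => (phi x α) ^ 2) ∧
    (∑' α : Fin d → ℕ, (phi x α) ^ 2) = 1 / (1 - ‖x‖ ^ 2 / 2) ∧
    (∑' α : Fin d → ℕ, (phi x α) ^ 2) ≤ 2 := by
  set r : ℝ := ‖x‖ ^ 2 / 2 with hr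
  have hr0 : 0 ≤ r := by positivity
  have hrhalf : r ≤ 1 / 2 := by
    have : ‖x‖ ^ 2 ≤ 1 := by
      nlinarith [norm_nonneg x]
    rw [hr]; linarith
  have hr1 : r < 1 := lt_of_le_of_lt hrhalf (by norm_num)
  set F : (Σ n : ℕ, (Finset.piAntidiag (univ : Finset (Fin d)) n)) → ℝ :=
    fun p => (phi x (degEquiv d p)) ^ 2 with hF
  have hFnn : ∀ p, 0 ≤ F p := fun p => sq_nonneg _
  have hfib : ∀ n : ℕ, ∑' (α : (Finset.piAntidiag (univ : Finset (Fin d)) n)),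
      F ⟨n, α⟩ = r ^ n := by
    intro n
    show (∑' (α : (Finset.piAntidiag (univ : Finset (Fin d)) n)),
        (phi x (α : Fin d → ℕ)) ^ 2) = r ^ n
    rw [Finset.tsum_subtype (Finset.piAntidiag (univ : Finset (Fin d)) n)
      (fun α => (phi x α) ^ 2)]
    exact fiber_sum x n
  have hgeom : Summable fun n : ℕ => r ^ n := summable_geometric_of_lt_one hr0 hr1
  have hsumF : Summable F := by
    rw [summable_sigma_of_nonneg hFnn]
    exact ⟨fun n => Summable.of_finite, hgeom.congr fun n => (hfib n).symm⟩
  have hsum : Summable (fun α : Fin d → ℕ => (phi x α) ^ 2) := (degEquiv d).summable_iff.1 hsumF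
  have htsum : (∑' α : Fin d → ℕ, (phi x α) ^ 2) = (1 - r)⁻¹ := by
    rw [← (degEquiv d).tsum_eq (fun α : Fin d → ℕ => (phi x α) ^ 2)]
    rw [show (∑' p, (phi x (degEquiv d p)) ^ 2) = ∑' p, F p from rfl, hsumF.tsum_sigma]
    simp_rw [hfib]
    exact tsum_geometric_of_lt_one hr0 hr1
  have h1r : (0:ℝ) < 1 - r := by linarith
  refine ⟨hsum, by rw [htsum, one_div], ?_⟩
  rw [htsum, inv_le_iff_one_le_mul₀ h1r]
  linarith
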